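/- arXiv:2208.12407 — 3 statements merged into one kernel-verified Lean document; each statement's English description precedes it below -/
import Mathlib

section
/- Let n ≥ 1, let A, B ∈ ℙ_n, and let t ∈ ℝ. Then A ♮_t B = B ♮_{1-t} A. -/
open Matrix
open scoped ComplexOrder

/-- Real power `A^t = exp(t · log A)` of a Hermitian positive definite matrix, defined via
the functional calculus (spectral decomposition). -/
noncomputable def mpow {n : ℕ} (A : Matrix (Fin n) (Fin n) ℂ) (t : ℝ) :
    Matrix (Fin n) (Fin n) ℂ :=
  if hA : A.IsHermitian then
    (hA.eigenvectorUnitary : Matrix (Fin n) (Fin n) ℂ) *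
      Matrix.diagonal (fun i => ((hA.eigenvalues i ^ t : ℝ) : ℂ)) *
      (star (hA.eigenvectorUnitary : Matrix (Fin n) (Fin n) ℂ))
  else A

/-- Logarithm of a Hermitian positive definite matrix via the functional calculus. -/
noncomputable def mlog {n : ℕ} (A : Matrix (Fin n) (Fin n) ℂ) : Matrix (Fin n) (Fin n) ℂ :=
  if hA : A.IsHermitian then
    (hA.eigenvectorUnitary : Matrix (Fin n) (Fin n) ℂ) *
      Matrix.diagonal (fun i => ((Real.log (hA.eigenvalues i) : ℝ) : ℂ)) *
      (star (hA.eigenvectorUnitary : Matrix (Fin n) (Fin n) ℂ))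
  else A

/-- Metric geometric mean `A # B = A^{1/2} (A^{-1/2} B A^{-1/2})^{1/2} A^{1/2}`. -/
noncomputable def geomMean {n : ℕ} (A B : Matrix (Fin n) (Fin n) ℂ) :
    Matrix (Fin n) (Fin n) ℂ :=
  mpow A (1/2) * mpow (mpow A (-(1/2)) * B * mpow A (-(1/2))) (1/2) * mpow A (1/2)

/-- Weighted spectral geometric mean `A ♮_t B = (A⁻¹ # B)^t A (A⁻¹ # B)^t`. -/
noncomputable def spectralMean {n : ℕ} (t : ℝ) (A B : Matrix (Fin n) (Fin n) ℂ) :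
    Matrix (Fin n) (Fin n) ℂ :=
  mpow (geomMean A⁻¹ B) t * A * mpow (geomMean A⁻¹ B) t

section Aux

variable {n : ℕ}

private lemma contOn' (f : ℝ → ℝ) (A : Matrix (Fin n) (Fin n) ℂ) :
    ContinuousOn f (spectrum ℝ A) :=
  (Matrix.finite_real_spectrum (A := A)).continuousOn f

private lemma spec_pos' {A : Matrix (Fin n) (Fin n) ℂ} (hA : A.PosDef) :
    ∀ x ∈ spectrum ℝ A, 0 < x := by
  rw [hA.1.spectrum_real_eq_range_eigenvalues]
  rintro x ⟨i, rfl⟩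
  exact hA.eigenvalues_pos i

private lemma mpow_eq_cfc {A : Matrix (Fin n) (Fin n) ℂ} (hA : A.IsHermitian) (t : ℝ) :
    mpow A t = cfc (fun x : ℝ => x ^ t) A := by
  rw [hA.cfc_eq]
  unfold mpow Matrix.IsHermitian.cfc
  rw [dif_pos hA]
  rfl

private lemma mpow_mul_mpow {A : Matrix (Fin n) (Fin n) ℂ} (hA : A.PosDef) (s t : ℝ) :
    mpow A s * mpow A t = mpow A (s + t) := by
  rw [mpow_eq_cfc hA.1, mpow_eq_cfc hA.1, mpow_eq_cfc hA.1,
    ← cfc_mul _ _ A (contOn' _ A) (contOn' _ A)]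
  exact cfc_congr fun x hx => (Real.rpow_add (spec_pos' hA x hx) s t).symm

private lemma mpow_one' {A : Matrix (Fin n) (Fin n) ℂ} (hA : A.IsHermitian) :
    mpow A 1 = A := by
  rw [mpow_eq_cfc hA]
  have : IsSelfAdjoint A := hA
  calc cfc (fun x : ℝ => x ^ (1:ℝ)) A = cfc (id : ℝ → ℝ) A :=
        cfc_congr fun x _ => Real.rpow_one x
    _ = A := cfc_id ℝ A

private lemma mpow_zero' {A : Matrix (Fin n) (Fin n) ℂ} (hA : A.IsHermitian) :
    mpow A 0 = 1 := by
  rw [mpow_eq_cfc hA]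
  calc cfc (fun x : ℝ => x ^ (0:ℝ)) A = cfc (fun _ : ℝ => (1:ℝ)) A :=
        cfc_congr fun x _ => Real.rpow_zero x
    _ = 1 := cfc_const_one ℝ A

private lemma posDef_conj {A U : Matrix (Fin n) (Fin n) ℂ} (hA : A.PosDef) (hU : IsUnit U) :
    (Uᴴ * A * U).PosDef := by
  refine .of_dotProduct_mulVec_pos (isHermitian_conjTranspose_mul_mul U hA.1) fun x hx => ?_
  have hUx : U *ᵥ x ≠ 0 := by
    have hinj : Function.Injective (U.mulVec) :=
      Matrix.mulVec_injective_iff_isUnit.mpr hU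
    intro h
    exact hx (hinj (by simpa using h))
  simpa only [star_mulVec, dotProduct_mulVec, vecMul_vecMul] using hA.dotProduct_mulVec_pos hUx

private lemma unitary_isUnit {U : Matrix (Fin n) (Fin n) ℂ}
    (hU : U ∈ unitary (Matrix (Fin n) (Fin n) ℂ)) : IsUnit U :=
  ⟨⟨U, star U, (Unitary.mem_iff.mp hU).2, (Unitary.mem_iff.mp hU).1⟩, rfl⟩

private lemma mpow_posDef {A : Matrix (Fin n) (Fin n) ℂ} (hA : A.PosDef) (t : ℝ) :
    (mpow A t).PosDef := by
  unfold mpow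
  rw [dif_pos hA.1]
  have hD : (Matrix.diagonal (fun i => ((hA.1.eigenvalues i ^ t : ℝ) : ℂ))).PosDef := by
    refine Matrix.PosDef.diagonal fun i => ?_
    exact_mod_cast Real.rpow_pos_of_pos (hA.eigenvalues_pos i) t
  have hU : IsUnit (star (hA.1.eigenvectorUnitary : Matrix (Fin n) (Fin n) ℂ)) :=
    unitary_isUnit (Unitary.star_mem (hA.1.eigenvectorUnitary).2)
  have := posDef_conj hD hU
  simpa only [star_eq_conjTranspose, conjTranspose_conjTranspose] using this

private lemma inv_eq_cfc {A : Matrix (Fin n) (Fin n) ℂ} (hA : A.PosDef) :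
    A⁻¹ = cfc (fun x : ℝ => x⁻¹) A := by
  have h : IsSelfAdjoint A := hA.1
  have := cfc_inv_id (R := ℝ) hA.isUnit.unit
  rw [IsUnit.unit_spec, Matrix.coe_units_inv] at this
  rw [this, IsUnit.unit_spec]

private lemma mpow_inv' {A : Matrix (Fin n) (Fin n) ℂ} (hA : A.PosDef) (t : ℝ) :
    mpow A⁻¹ t = mpow A (-t) := by
  have hsa : IsSelfAdjoint A := hA.1
  rw [mpow_eq_cfc hA.inv.1 t, mpow_eq_cfc hA.1 (-t), inv_eq_cfc hA,
    ← cfc_comp (fun x : ℝ => x ^ t) (fun x : ℝ => x⁻¹) A hsa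
      (((Matrix.finite_real_spectrum (A := A)).image _).continuousOn _) (contOn' _ A)]
  refine cfc_congr fun x hx => ?_
  have hx' := spec_pos' hA x hx
  simp only [Function.comp_apply]
  rw [Real.rpow_neg hx'.le, ← Real.inv_rpow hx'.le]

private lemma geomMean_props {C B : Matrix (Fin n) (Fin n) ℂ}
    (hC : C.PosDef) (hB : B.PosDef) :
    (geomMean C B).PosDef ∧ geomMean C B * C⁻¹ * geomMean C B = B := by
  set S := mpow C (1/2) with hSdef
  set T := mpow C (-(1/2)) with hTdef
  have hS : S.PosDef := mpow_posDef hC _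
  have hT : T.PosDef := mpow_posDef hC _
  have hST : S * T = 1 := by
    rw [hSdef, hTdef, mpow_mul_mpow hC]
    norm_num [mpow_zero' hC.1]
  have hTS : T * S = 1 := by
    rw [hSdef, hTdef, mpow_mul_mpow hC]
    norm_num [mpow_zero' hC.1]
  have hTT : T * T = C⁻¹ := by
    rw [hTdef, mpow_mul_mpow hC]
    refine (Matrix.inv_eq_right_inv ?_).symm
    have h0 := mpow_mul_mpow hC 1 (-(1/2) + -(1/2))
    rw [mpow_one' hC.1] at h0
    rw [h0]
    norm_num [mpow_zero' hC.1]
  have hN : (T * B * T).PosDef := by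
    have := posDef_conj hB hT.isUnit
    rwa [show Tᴴ = T from hT.1] at this
  set Q := mpow (T * B * T) (1/2) with hQdef
  have hQ : Q.PosDef := mpow_posDef hN _
  have hQQ : Q * Q = T * B * T := by
    rw [hQdef, mpow_mul_mpow hN]
    norm_num [mpow_one' hN.1]
  have hG : geomMean C B = S * Q * S := rfl
  constructor
  · rw [hG]
    have := posDef_conj hQ hS.isUnit
    rwa [show Sᴴ = S from hS.1] at this
  · rw [hG, ← hTT]
    calc S * Q * S * (T * T) * (S * Q * S)
        = S * (Q * ((S * T) * (T * S)) * Q) * S := by noncomm_ring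
      _ = S * (Q * Q) * S := by rw [hST, hTS]; noncomm_ring
      _ = (S * T) * B * (T * S) := by rw [hQQ]; noncomm_ring
      _ = B := by rw [hST, hTS, one_mul, mul_one]

open scoped MatrixOrder in
private lemma riccati_unique {B M N : Matrix (Fin n) (Fin n) ℂ}
    (hB : B.PosDef) (hM : M.PosDef) (hN : N.PosDef)
    (h : M * B * M = N * B * N) : M = N := by
  set R := CFC.sqrt B with hRdef
  have hRR : R * R = B := CFC.sqrt_mul_sqrt_self B hB.posSemidef.nonneg
  have hRH : Rᴴ = R := (CFC.sqrt_nonneg B).posSemidef.1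
  have hdet : IsUnit R.det := by
    have h2 : IsUnit (R.det * R.det) := by
      rw [← Matrix.det_mul, hRR]
      exact hB.det_pos.ne'.isUnit
    exact isUnit_of_mul_isUnit_left h2
  have hP : (Rᴴ * M * R).PosSemidef := hM.posSemidef.conjTranspose_mul_mul_same R
  have hQ : (Rᴴ * N * R).PosSemidef := hN.posSemidef.conjTranspose_mul_mul_same R
  have hsq : (Rᴴ * M * R) ^ 2 = (Rᴴ * N * R) ^ 2 := by
    rw [pow_two, pow_two, hRH]
    calc R * M * R * (R * M * R) = R * (M * (R * R) * M) * R := by noncomm_ring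
      _ = R * (M * B * M) * R := by rw [hRR]
      _ = R * (N * B * N) * R := by rw [h]
      _ = R * (N * (R * R) * N) * R := by rw [hRR]
      _ = R * N * R * (R * N * R) := by noncomm_ring
  have heq : Rᴴ * M * R = Rᴴ * N * R := by
    rw [← CFC.sqrt_sq (Rᴴ * M * R) hP.nonneg, hsq, CFC.sqrt_sq _ hQ.nonneg]
  rw [hRH] at heq
  have e1 : ∀ (M : Matrix (Fin n) (Fin n) ℂ), R⁻¹ * (R * M * R) * R⁻¹ = M := by
    intro M
    simp only [← Matrix.mul_assoc]
    rw [Matrix.nonsing_inv_mul R hdet, one_mul, Matrix.mul_assoc,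
      Matrix.mul_nonsing_inv R hdet, mul_one]
  calc M = R⁻¹ * (R * M * R) * R⁻¹ := (e1 M).symm
    _ = R⁻¹ * (R * N * R) * R⁻¹ := by rw [heq]
    _ = N := e1 N

end Aux

theorem spectralMean_comm {n : ℕ} (hn : 1 ≤ n) (A B : Matrix (Fin n) (Fin n) ℂ)
    (hA : A.PosDef) (hB : B.PosDef) (t : ℝ) :
    spectralMean t A B = spectralMean (1 - t) B A := by
  obtain ⟨hX, hXeq⟩ := geomMean_props hA.inv hB
  obtain ⟨hY, hYeq⟩ := geomMean_props hB.inv hA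
  set X := geomMean A⁻¹ B with hXdef
  set Y := geomMean B⁻¹ A with hYdef
  rw [Matrix.nonsing_inv_nonsing_inv A hA.det_pos.ne'.isUnit] at hXeq
  rw [Matrix.nonsing_inv_nonsing_inv B hB.det_pos.ne'.isUnit] at hYeq
  have hXdet : IsUnit X.det := (Matrix.isUnit_iff_isUnit_det X).mp hX.isUnit
  have hXinv : X⁻¹.PosDef := hX.inv
  have hXinvEq : X⁻¹ * B * X⁻¹ = A := by
    rw [← hXeq]
    simp only [← Matrix.mul_assoc]
    rw [Matrix.nonsing_inv_mul X hXdet, one_mul, Matrix.mul_assoc,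
      Matrix.mul_nonsing_inv X hXdet, mul_one]
  have hYX : Y = X⁻¹ := riccati_unique hB hY hXinv (hYeq.trans hXinvEq.symm)
  have h1 : mpow X (-(1 - t)) * X = mpow X t := by
    have h0 := mpow_mul_mpow hX (-(1 - t)) 1
    rw [mpow_one' hX.1] at h0
    rw [h0, show (-(1 - t) + 1 : ℝ) = t from by ring]
  have h2 : X * mpow X (-(1 - t)) = mpow X t := by
    have h0 := mpow_mul_mpow hX 1 (-(1 - t))
    rw [mpow_one' hX.1] at h0
    rw [h0, show (1 + -(1 - t) : ℝ) = t from by ring]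
  unfold spectralMean
  rw [← hXdef, ← hYdef, hYX, mpow_inv' hX]
  conv_rhs => rw [← hXeq]
  symm
  calc mpow X (-(1 - t)) * (X * A * X) * mpow X (-(1 - t))
      = (mpow X (-(1 - t)) * X) * A * (X * mpow X (-(1 - t))) := by noncomm_ring
    _ = mpow X t * A * mpow X t := by rw [h1, h2]
end

section
/- Let n ≥ 1, let A, B ∈ ℙ_n, and let t ∈ ℝ. Then (A ♮_t B)^{-1} = A^{-1} ♮_t B^{-1}. -/
open Matrix
open scoped ComplexOrder

namespace SpectralMeanAux

variable {n : ℕ} {A B : Matrix (Fin n) (Fin n) ℂ} {t s : ℝ}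

lemma spec_cont (A : Matrix (Fin n) (Fin n) ℂ) (f : ℝ → ℝ) :
    ContinuousOn f (spectrum ℝ A) :=
  (Matrix.finite_real_spectrum (A := A)).continuousOn f

lemma spec_pos (hA : A.PosDef) : ∀ x ∈ spectrum ℝ A, 0 < x := by
  intro x hx
  rw [hA.isHermitian.spectrum_real_eq_range_eigenvalues] at hx
  obtain ⟨i, rfl⟩ := hx
  exact hA.eigenvalues_pos i

lemma mpow_eq (hA : A.IsHermitian) (t : ℝ) : mpow A t = cfc (fun x : ℝ => x ^ t) A := by
  rw [mpow, dif_pos hA, Matrix.IsHermitian.cfc_eq, Matrix.IsHermitian.cfc]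
  rfl

/-- Conjugation preserves positive definiteness. -/
lemma posDef_conj (hB : Matrix.PosDef B) (C : Matrix (Fin n) (Fin n) ℂ) (hC : IsUnit C) :
    (Cᴴ * B * C).PosDef := by
  refine Matrix.posDef_iff_dotProduct_mulVec.mpr ⟨Matrix.isHermitian_conjTranspose_mul_mul C hB.1, fun x hx => ?_⟩
  have hCx : C *ᵥ x ≠ 0 := by
    intro h
    exact hx (Matrix.mulVec_injective_iff_isUnit.mpr hC (by simpa using h))
  simpa only [star_mulVec, dotProduct_mulVec, vecMul_vecMul] using hB.dotProduct_mulVec_pos hCx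

lemma cfc_posDef (hA : A.PosDef) (f : ℝ → ℝ) (hf : ∀ x : ℝ, 0 < x → 0 < f x) :
    (cfc f A).PosDef := by
  rw [hA.isHermitian.cfc_eq, Matrix.IsHermitian.cfc]
  have hU : IsUnit (hA.isHermitian.eigenvectorUnitary : Matrix (Fin n) (Fin n) ℂ) :=
    (Unitary.toUnits hA.isHermitian.eigenvectorUnitary).isUnit
  have hD : (Matrix.diagonal (RCLike.ofReal ∘ f ∘ hA.isHermitian.eigenvalues :
      Fin n → ℂ)).PosDef := by
    rw [Matrix.posDef_diagonal_iff]
    intro i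
    simp only [Function.comp_apply]
    exact RCLike.ofReal_pos.mpr (hf _ (hA.eigenvalues_pos i))
  have := posDef_conj hD (star hA.isHermitian.eigenvectorUnitary :
    Matrix (Fin n) (Fin n) ℂ) hU.star
  simpa [Matrix.star_eq_conjTranspose, Matrix.conjTranspose_conjTranspose] using this

lemma mpow_posDef (hA : A.PosDef) (t : ℝ) : (mpow A t).PosDef := by
  rw [mpow_eq hA.isHermitian]
  exact cfc_posDef hA _ fun x hx => Real.rpow_pos_of_pos hx t

lemma mpow_isHermitian (hA : A.PosDef) (t : ℝ) : (mpow A t).IsHermitian :=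
  (mpow_posDef hA t).isHermitian

lemma mpow_mul_mpow (hA : A.PosDef) (s t : ℝ) :
    mpow A s * mpow A t = mpow A (s + t) := by
  rw [mpow_eq hA.isHermitian, mpow_eq hA.isHermitian, mpow_eq hA.isHermitian,
    ← cfc_mul _ _ A (spec_cont A _) (spec_cont A _)]
  exact cfc_congr fun x hx => (Real.rpow_add (spec_pos hA x hx) s t).symm

lemma mpow_zero (hA : A.PosDef) : mpow A 0 = 1 := by
  rw [mpow_eq hA.isHermitian]
  calc cfc (fun x : ℝ => x ^ (0:ℝ)) A = cfc (fun _ : ℝ => (1:ℝ)) A :=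
        cfc_congr fun x _ => Real.rpow_zero x
    _ = 1 := cfc_const_one ℝ A hA.isHermitian.isSelfAdjoint

lemma mpow_inv (hA : A.PosDef) (t : ℝ) : (mpow A t)⁻¹ = mpow A (-t) := by
  apply Matrix.inv_eq_right_inv
  rw [mpow_mul_mpow hA, add_neg_cancel, mpow_zero hA]

lemma inv_eq_cfc (hA : A.PosDef) : A⁻¹ = cfc (fun x : ℝ => x⁻¹) A := by
  have h1 : cfc (fun x : ℝ => x⁻¹) A * cfc (fun x : ℝ => x) A = 1 := by
    rw [← cfc_mul _ _ A (spec_cont A _) (spec_cont A _)]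
    calc cfc (fun x : ℝ => x⁻¹ * x) A = cfc (fun _ : ℝ => (1:ℝ)) A :=
          cfc_congr fun x hx => inv_mul_cancel₀ (spec_pos hA x hx).ne'
      _ = 1 := cfc_const_one ℝ A hA.isHermitian.isSelfAdjoint
  rw [cfc_id' ℝ A hA.isHermitian.isSelfAdjoint] at h1
  exact Matrix.inv_eq_left_inv h1

lemma mpow_inv_base (hA : A.PosDef) (t : ℝ) : mpow A⁻¹ t = mpow A (-t) := by
  rw [mpow_eq hA.inv.isHermitian, mpow_eq hA.isHermitian, inv_eq_cfc hA,
    ← cfc_comp' _ _ A (((Matrix.finite_real_spectrum (A := A)).image _).continuousOn _)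
      (spec_cont A _) hA.isHermitian.isSelfAdjoint]
  refine cfc_congr fun x hx => ?_
  show (x⁻¹ : ℝ) ^ t = x ^ (-t)
  rw [Real.inv_rpow (spec_pos hA x hx).le, Real.rpow_neg (spec_pos hA x hx).le]

lemma inner_posDef (hA : A.PosDef) (hB : B.PosDef) :
    (mpow A (-(1/2)) * B * mpow A (-(1/2))).PosDef := by
  have h := posDef_conj hB (mpow A (-(1/2))) (mpow_posDef hA _).isUnit
  rwa [(mpow_isHermitian hA _).eq] at h

lemma geomMean_posDef (hA : A.PosDef) (hB : B.PosDef) : (geomMean A B).PosDef := by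
  have h := posDef_conj (mpow_posDef (inner_posDef hA hB) (1/2)) (mpow A (1/2))
    (mpow_posDef hA _).isUnit
  rwa [(mpow_isHermitian hA _).eq] at h

lemma geomMean_inv (hA : A.PosDef) (hB : B.PosDef) :
    (geomMean A B)⁻¹ = geomMean A⁻¹ B⁻¹ := by
  have hinner := inner_posDef hA hB
  have e4 : (mpow A (-(1/2)) * B * mpow A (-(1/2)))⁻¹ =
      mpow A (1/2) * B⁻¹ * mpow A (1/2) := by
    rw [Matrix.mul_inv_rev, Matrix.mul_inv_rev, mpow_inv hA, neg_neg, mul_assoc]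
  rw [geomMean, geomMean, Matrix.mul_inv_rev, Matrix.mul_inv_rev, mpow_inv hA,
    mpow_inv hinner, ← mpow_inv_base hinner, e4, mpow_inv_base hA, mpow_inv_base hA, neg_neg,
    ← mul_assoc]

end SpectralMeanAux

open SpectralMeanAux in

theorem spectralMean_inv {n : ℕ} (hn : 1 ≤ n) (A B : Matrix (Fin n) (Fin n) ℂ)
    (hA : A.PosDef) (hB : B.PosDef) (t : ℝ) :
    (spectralMean t A B)⁻¹ = spectralMean t A⁻¹ B⁻¹ := by
  have hG : (geomMean A⁻¹ B).PosDef := geomMean_posDef hA.inv hB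
  have hAA : A⁻¹⁻¹ = A := Matrix.nonsing_inv_nonsing_inv A hA.det_pos.ne'.isUnit
  rw [spectralMean, spectralMean, Matrix.mul_inv_rev, Matrix.mul_inv_rev,
    mpow_inv hG, ← mpow_inv_base hG, geomMean_inv hA.inv hB, hAA, ← mul_assoc]
end

section
/- Let n ≥ 1, let A, B ∈ ℙ_n, and let s, t be real numbers with 0 < s ≤ t ≤ 1. Then in the Loewner order: ((A^s + B^{-s})/2)^t ≤ ((A^t + B^{-t})/2)^s. -/
open Matrix
open scoped ComplexOrder

namespace AvgRpow
open MeasureTheory Set intervalIntegral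


noncomputable def I0 (r : ℝ) : ℝ := ∫ l in Ioi (0:ℝ), l ^ (r-1) * (1 / (1 + l))

lemma kern_contOn {m r : ℝ} (hm : 0 < m) :
    ContinuousOn (fun l : ℝ => l ^ (r-1) * (m / (m + l))) (Ioi 0) := by
  apply ContinuousOn.mul
  · exact continuousOn_id.rpow_const (fun x hx => Or.inl (ne_of_gt hx))
  · exact continuousOn_const.div (continuousOn_const.add continuousOn_id)
      (fun x hx => by have : (0:ℝ) < x := hx; positivity)

lemma kern_aesm {m r : ℝ} (hm : 0 < m) {s : Set ℝ} (hs : MeasurableSet s) (hsub : s ⊆ Ioi 0) :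
    AEStronglyMeasurable (fun l : ℝ => l ^ (r-1) * (m / (m + l))) (volume.restrict s) :=
  ((kern_contOn hm).mono hsub).aestronglyMeasurable hs

lemma kern_integrableOn {m r : ℝ} (hm : 0 < m) (hr0 : 0 < r) (hr1 : r < 1) :
    IntegrableOn (fun l : ℝ => l ^ (r-1) * (m / (m + l))) (Ioi 0) := by
  rw [← Ioo_union_Ici_eq_Ioi (zero_lt_one (α := ℝ))]
  apply IntegrableOn.union
  · have hbase : IntegrableOn (fun l : ℝ => l ^ (r-1)) (Ioo (0:ℝ) 1) :=
      (integrableOn_Ioo_rpow_iff one_pos).2 (by linarith)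
    refine Integrable.mono hbase (kern_aesm hm measurableSet_Ioo Ioo_subset_Ioi_self) ?_
    filter_upwards [ae_restrict_mem measurableSet_Ioo] with l hl
    have h0 : (0:ℝ) < l := hl.1
    have h1 : 0 ≤ l ^ (r-1) := Real.rpow_nonneg h0.le _
    have h2 : 0 ≤ m / (m+l) := by positivity
    have h3 : m / (m+l) ≤ 1 := by rw [div_le_one (by linarith)]; linarith
    rw [Real.norm_eq_abs, Real.norm_eq_abs, abs_of_nonneg (mul_nonneg h1 h2), abs_of_nonneg h1]
    exact mul_le_of_le_one_right h1 h3
  · rw [integrableOn_Ici_iff_integrableOn_Ioi]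
    have hbase : IntegrableOn (fun l : ℝ => m * l ^ (r-2)) (Ioi (1:ℝ)) :=
      (integrableOn_Ioi_rpow_of_lt (by linarith) one_pos).const_mul m
    refine Integrable.mono hbase (kern_aesm (s := Ioi (1:ℝ)) hm measurableSet_Ioi
      (fun x hx => mem_Ioi.2 (lt_trans one_pos hx))) ?_
    filter_upwards [ae_restrict_mem measurableSet_Ioi] with l hl
    have h0 : (0:ℝ) < l := lt_trans one_pos hl
    have h1 : 0 ≤ l ^ (r-1) := Real.rpow_nonneg h0.le _
    have key : l ^ (r-1) * (m/(m+l)) ≤ m * l ^ (r-2) := by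
      have e1 : m / (m+l) ≤ m / l := by gcongr; linarith
      have e2 : m * l ^ (r-2) = l ^ (r-1) * (m / l) := by
        rw [show r - 2 = (r-1) - 1 by ring, Real.rpow_sub h0, Real.rpow_one]
        ring
      rw [e2]
      exact mul_le_mul_of_nonneg_left e1 h1
    rw [Real.norm_eq_abs, Real.norm_eq_abs, abs_of_nonneg (by positivity),
      abs_of_nonneg (by positivity)]
    exact key

lemma kern_integral {m r : ℝ} (hm : 0 < m) (hr0 : 0 < r) (hr1 : r < 1) :
    ∫ l in Ioi (0:ℝ), l ^ (r-1) * (m / (m + l)) = m ^ r * I0 r := by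
  have h := integral_comp_mul_left_Ioi (fun l : ℝ => l ^ (r-1) * (m / (m + l))) 0 hm
  rw [mul_zero] at h
  have congrEq : ∀ x ∈ Ioi (0:ℝ),
      (fun l : ℝ => l ^ (r-1) * (m / (m + l))) (m * x)
        = m ^ (r-1) * (x ^ (r-1) * (1 / (1 + x))) := by
    intro x hx
    have hx0 : (0:ℝ) < x := hx
    have : (m * x) ^ (r-1) = m ^ (r-1) * x ^ (r-1) := Real.mul_rpow hm.le hx0.le
    simp only [this]
    have : m / (m + m * x) = 1 / (1 + x) := by
      rw [div_eq_div_iff (by nlinarith) (by nlinarith)]; ring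
    rw [this]; ring
  have h' : m⁻¹ • ∫ l in Ioi (0:ℝ), l ^ (r-1) * (m / (m + l)) = m ^ (r-1) * I0 r := by
    rw [← h, setIntegral_congr_fun measurableSet_Ioi (fun x hx => congrEq x hx),
      MeasureTheory.integral_const_mul]
    rfl
  have h2 : ∫ l in Ioi (0:ℝ), l ^ (r-1) * (m / (m + l))
      = m * (m ^ (r-1) * I0 r) := by
    rw [← h', smul_eq_mul, ← mul_assoc, mul_inv_cancel₀ hm.ne', one_mul]
  rw [h2, ← mul_assoc]
  congr 1
  have : m ^ r = m ^ (1:ℝ) * m ^ (r-1) := by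
    rw [← Real.rpow_add hm]; norm_num
  rw [this, Real.rpow_one]

lemma I0_pos {r : ℝ} (hr0 : 0 < r) (hr1 : r < 1) : 0 < I0 r := by
  have hint : IntegrableOn (fun l : ℝ => l ^ (r-1) * (1 / (1 + l))) (Ioi 0) := by
    have := kern_integrableOn (m := 1) one_pos hr0 hr1
    simpa using this
  rw [I0, setIntegral_pos_iff_support_of_nonneg_ae]
  · have hsub : Ioi (0:ℝ) ⊆ Function.support (fun l : ℝ => l ^ (r-1) * (1 / (1 + l))) := by
      intro l hl
      have h0 : (0:ℝ) < l := hl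
      have : 0 < l ^ (r-1) * (1 / (1 + l)) := by positivity
      exact ne_of_gt this
    have : Function.support (fun l : ℝ => l ^ (r-1) * (1 / (1 + l))) ∩ Ioi 0 = Ioi 0 :=
      inter_eq_self_of_subset_right hsub
    rw [this, Real.volume_Ioi]
    simp
  · filter_upwards [ae_restrict_mem measurableSet_Ioi] with l hl
    have h0 : (0:ℝ) < l := hl
    positivity
  · exact hint

lemma rpow_eq_integral {m r : ℝ} (hm : 0 < m) (hr0 : 0 < r) (hr1 : r < 1) :
    m ^ r = (I0 r)⁻¹ * ∫ l in Ioi (0:ℝ), l ^ (r-1) * (m / (m + l)) := by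
  rw [kern_integral hm hr0 hr1, ← mul_assoc, mul_comm (I0 r)⁻¹, mul_assoc,
    inv_mul_cancel₀ (I0_pos hr0 hr1).ne', mul_one]



variable {n : ℕ} {A P Q : Matrix (Fin n) (Fin n) ℂ}

lemma contOn_finite (f : ℝ → ℝ) {s : Set ℝ} (hs : s.Finite) : ContinuousOn f s := by
  haveI := hs.to_subtype
  rw [continuousOn_iff_continuous_restrict]
  exact continuous_of_discreteTopology

lemma contOn (f : ℝ → ℝ) (A : Matrix (Fin n) (Fin n) ℂ) : ContinuousOn f (spectrum ℝ A) :=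
  contOn_finite f A.finite_real_spectrum

lemma contOn_image (f g : ℝ → ℝ) (A : Matrix (Fin n) (Fin n) ℂ) :
    ContinuousOn f (g '' spectrum ℝ A) :=
  contOn_finite f ((Matrix.finite_real_spectrum (A := A)).image g)

lemma isHermitian_cfc (f : ℝ → ℝ) (A : Matrix (Fin n) (Fin n) ℂ) : (cfc f A).IsHermitian := by
  have h : IsSelfAdjoint (cfc f A) := cfc_predicate f A
  exact h

/-- Quadratic form of `cfc f A` as a sum over eigenvalues. -/
lemma qf_cfc (hA : A.IsHermitian) (f : ℝ → ℝ) (x : Fin n → ℂ) :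
    star x ⬝ᵥ ((cfc f A) *ᵥ x) =
      ((∑ k, f (hA.eigenvalues k) *
        Complex.normSq ((star (hA.eigenvectorUnitary : Matrix (Fin n) (Fin n) ℂ) *ᵥ x) k) : ℝ) : ℂ) := by
  rw [hA.cfc_eq, Matrix.IsHermitian.cfc, Unitary.conjStarAlgAut_apply]
  set U : Matrix (Fin n) (Fin n) ℂ := (hA.eigenvectorUnitary : Matrix (Fin n) (Fin n) ℂ) with hU
  set y : Fin n → ℂ := star U *ᵥ x with hy
  have hsy : star x ᵥ* U = star y := by
    rw [hy, Matrix.star_mulVec, Matrix.star_eq_conjTranspose, Matrix.conjTranspose_conjTranspose]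
  rw [← Matrix.mulVec_mulVec, ← Matrix.mulVec_mulVec, Matrix.dotProduct_mulVec, hsy]
  push_cast
  simp only [dotProduct, Matrix.mulVec_diagonal, Function.comp_apply, Pi.star_apply]
  refine Finset.sum_congr rfl fun k _ => ?_
  simp only [Complex.star_def]
  rw [← Complex.mul_conj (y k)]
  rw [mul_left_comm]
  congr 1
  exact mul_comm _ _

lemma star_unitary_mulVec_eq_zero_iff (hA : A.IsHermitian) (x : Fin n → ℂ)
    (h : star (hA.eigenvectorUnitary : Matrix (Fin n) (Fin n) ℂ) *ᵥ x = 0) : x = 0 := by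
  have := congrArg (fun v => (hA.eigenvectorUnitary : Matrix (Fin n) (Fin n) ℂ) *ᵥ v) h
  simpa [Matrix.mulVec_mulVec, Unitary.coe_mul_star_self] using this

lemma cfc_posSemidef (hA : A.IsHermitian) {f : ℝ → ℝ}
    (h : ∀ i, 0 ≤ f (hA.eigenvalues i)) : (cfc f A).PosSemidef := by
  refine .of_dotProduct_mulVec_nonneg (isHermitian_cfc f A) fun x => ?_
  rw [qf_cfc hA f x]
  rw [Complex.zero_le_real]
  exact Finset.sum_nonneg fun k _ => mul_nonneg (h k) (Complex.normSq_nonneg _)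

lemma cfc_posDef (hA : A.IsHermitian) {f : ℝ → ℝ}
    (h : ∀ i, 0 < f (hA.eigenvalues i)) : (cfc f A).PosDef := by
  refine .of_dotProduct_mulVec_pos (isHermitian_cfc f A) fun x hx => ?_
  rw [qf_cfc hA f x]
  rw [Complex.zero_lt_real]
  set y := star (hA.eigenvectorUnitary : Matrix (Fin n) (Fin n) ℂ) *ᵥ x with hy
  have hy0 : y ≠ 0 := fun hc => hx (star_unitary_mulVec_eq_zero_iff hA x hc)
  obtain ⟨k, hk⟩ : ∃ k, y k ≠ 0 := by
    by_contra hc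
    push_neg at hc
    exact hy0 (funext hc)
  refine Finset.sum_pos' (fun i _ => mul_nonneg (h i).le (Complex.normSq_nonneg _)) ?_
  exact ⟨k, Finset.mem_univ k, mul_pos (h k) (by simpa [Complex.normSq_pos] using hk)⟩

lemma cfc_eigen_nonneg (hA : A.IsHermitian) {f : ℝ → ℝ}
    (hpsd : (cfc f A).PosSemidef) (i : Fin n) : 0 ≤ f (hA.eigenvalues i) := by
  have h := hpsd.dotProduct_mulVec_nonneg ((hA.eigenvectorUnitary : Matrix (Fin n) (Fin n) ℂ) *ᵥ Pi.single i 1)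
  rw [qf_cfc hA f, Complex.zero_le_real] at h
  have hy : star (hA.eigenvectorUnitary : Matrix (Fin n) (Fin n) ℂ) *ᵥ
      ((hA.eigenvectorUnitary : Matrix (Fin n) (Fin n) ℂ) *ᵥ Pi.single i 1) = Pi.single i 1 := by
    rw [Matrix.mulVec_mulVec, Unitary.coe_star_mul_self, Matrix.one_mulVec]
  rw [hy] at h
  have : ∑ k, f (hA.eigenvalues k) * Complex.normSq ((Pi.single i 1 : Fin n → ℂ) k)
      = f (hA.eigenvalues i) := by
    rw [Finset.sum_eq_single i]
    · simp
    · intro b _ hb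
      simp [Pi.single_apply, hb]
    · simp
  rwa [this] at h



lemma spectrum_pos (hA : A.PosDef) : ∀ x ∈ spectrum ℝ A, 0 < x := by
  rw [hA.1.spectrum_real_eq_range_eigenvalues]
  rintro x ⟨i, rfl⟩
  exact hA.eigenvalues_pos i

lemma pinv_mul_self (hP : P.PosDef) : cfc (fun x : ℝ => x⁻¹) P * P = 1 := by
  have hPs := hP.1.isSelfAdjoint
  have h1 : cfc (fun x : ℝ => x⁻¹ * x) P
      = cfc (fun x : ℝ => x⁻¹) P * cfc (fun x : ℝ => x) P :=
    cfc_mul _ _ P (contOn _ _) (contOn _ _)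
  rw [cfc_id' ℝ P hPs] at h1
  rw [← h1, cfc_congr (g := fun _ : ℝ => (1:ℝ))
    (fun x hx => inv_mul_cancel₀ (spectrum_pos hP x hx).ne'), cfc_const_one ℝ P hPs]

lemma self_mul_pinv (hP : P.PosDef) : P * cfc (fun x : ℝ => x⁻¹) P = 1 := by
  have hPs := hP.1.isSelfAdjoint
  have h1 : cfc (fun x : ℝ => x * x⁻¹) P
      = cfc (fun x : ℝ => x) P * cfc (fun x : ℝ => x⁻¹) P :=
    cfc_mul _ _ P (contOn _ _) (contOn _ _)
  rw [cfc_id' ℝ P hPs] at h1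
  rw [← h1, cfc_congr (g := fun _ : ℝ => (1:ℝ))
    (fun x hx => mul_inv_cancel₀ (spectrum_pos hP x hx).ne'), cfc_const_one ℝ P hPs]

lemma pinv_unique (hP : P.PosDef) {R : Matrix (Fin n) (Fin n) ℂ} (hR : R * P = 1) :
    R = cfc (fun x : ℝ => x⁻¹) P := by
  calc R = R * (P * cfc (fun x : ℝ => x⁻¹) P) := by rw [self_mul_pinv hP, mul_one]
    _ = (R * P) * cfc (fun x : ℝ => x⁻¹) P := by rw [mul_assoc]
    _ = cfc (fun x : ℝ => x⁻¹) P := by rw [hR, one_mul]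

lemma posDef_conj (hP : P.PosDef) {K L : Matrix (Fin n) (Fin n) ℂ}
    (hK : K.IsHermitian) (hLK : L * K = 1) : (K * P * K).PosDef := by
  refine .of_dotProduct_mulVec_pos ?_ ?_
  · show (K * P * K)ᴴ = K * P * K
    simp [Matrix.conjTranspose_mul, hK.eq, hP.1.eq, Matrix.mul_assoc]
  · intro x hx
    have hKx : K *ᵥ x ≠ 0 := by
      intro hc
      apply hx
      have := congrArg (fun v => L *ᵥ v) hc
      simpa [Matrix.mulVec_mulVec, hLK] using this
    have hqf : star x ⬝ᵥ ((K * P * K) *ᵥ x) = star (K *ᵥ x) ⬝ᵥ (P *ᵥ (K *ᵥ x)) := by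
      rw [← Matrix.mulVec_mulVec, ← Matrix.mulVec_mulVec, Matrix.dotProduct_mulVec]
      congr 1
      rw [Matrix.star_mulVec, hK.eq]
    rw [hqf]
    exact hP.dotProduct_mulVec_pos hKx

lemma inv_antitone (hP : P.PosDef) (hQ : Q.PosDef) (hPQ : (Q - P).PosSemidef) :
    (cfc (fun x : ℝ => x⁻¹) P - cfc (fun x : ℝ => x⁻¹) Q).PosSemidef := by
  have hQs := hQ.1.isSelfAdjoint
  set K := cfc (fun x : ℝ => (Real.sqrt x)⁻¹) Q with hKdef
  set L := cfc (fun x : ℝ => Real.sqrt x) Q with hLdef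
  have hKh : K.IsHermitian := isHermitian_cfc _ Q
  have hLK : L * K = 1 := by
    rw [hLdef, hKdef, ← cfc_mul _ _ Q (contOn _ _) (contOn _ _),
      cfc_congr (g := fun _ : ℝ => (1:ℝ)) (fun x hx =>
        mul_inv_cancel₀ (Real.sqrt_ne_zero'.mpr (spectrum_pos hQ x hx))),
      cfc_const_one ℝ Q hQs]
  have hKL : K * L = 1 := by
    rw [hLdef, hKdef, ← cfc_mul _ _ Q (contOn _ _) (contOn _ _),
      cfc_congr (g := fun _ : ℝ => (1:ℝ)) (fun x hx =>
        inv_mul_cancel₀ (Real.sqrt_ne_zero'.mpr (spectrum_pos hQ x hx))),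
      cfc_const_one ℝ Q hQs]
  have hKQK : K * Q * K = 1 := by
    conv_lhs => rw [show Q = cfc (fun x : ℝ => x) Q from (cfc_id' ℝ Q hQs).symm]
    rw [hKdef, ← cfc_mul _ _ Q (contOn _ _) (contOn _ _),
      ← cfc_mul _ _ Q (contOn _ _) (contOn _ _)]
    rw [cfc_congr (g := fun _ : ℝ => (1:ℝ)) (fun x hx => ?_), cfc_const_one ℝ Q hQs]
    have hx0 := spectrum_pos hQ x hx
    field_simp
    exact (Real.sq_sqrt hx0.le).symm
  set C := K * P * K with hC
  have hCpos : C.PosDef := posDef_conj hP hKh hLK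
  have hCherm := hCpos.1
  have hCs := hCherm.isSelfAdjoint
  have h1C : ((1 : Matrix (Fin n) (Fin n) ℂ) - C).PosSemidef := by
    have e : (1 : Matrix (Fin n) (Fin n) ℂ) - C = K * (Q - P) * K := by
      rw [mul_sub, sub_mul, hKQK, hC]
    rw [e]
    have := hPQ.mul_mul_conjTranspose_same K
    rwa [hKh.eq] at this
  have hev : ∀ i, 0 ≤ 1 - hCherm.eigenvalues i := by
    have e : (1 : Matrix (Fin n) (Fin n) ℂ) - C = cfc (fun x : ℝ => 1 - x) C := by
      rw [cfc_sub _ _ C (contOn _ _) (contOn _ _), cfc_const_one ℝ C hCs, cfc_id' ℝ C hCs]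
    exact fun i => cfc_eigen_nonneg hCherm (e ▸ h1C) i
  have hkey : (cfc (fun x : ℝ => x⁻¹) C - 1).PosSemidef := by
    have e : cfc (fun x : ℝ => x⁻¹) C - 1 = cfc (fun x : ℝ => x⁻¹ - 1) C := by
      rw [cfc_sub _ _ C (contOn _ _) (contOn _ _), cfc_const_one ℝ C hCs]
    rw [e]
    apply cfc_posSemidef hCherm
    intro i
    have h1 := hCpos.eigenvalues_pos i
    have h2 := hev i
    have hinv : hCherm.eigenvalues i * (hCherm.eigenvalues i)⁻¹ = 1 :=
      mul_inv_cancel₀ h1.ne'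
    nlinarith [inv_pos.mpr h1]
  have hPLCL : P = L * C * L := by
    rw [hC]
    have e : L * (K * P * K) * L = (L * K) * P * (K * L) := by
      simp only [Matrix.mul_assoc]
    rw [e, hLK, hKL, one_mul, mul_one]
  have hPinv : cfc (fun x : ℝ => x⁻¹) P = K * cfc (fun x : ℝ => x⁻¹) C * K := by
    symm
    apply pinv_unique hP
    have hKP : K * P = C * L := by
      rw [hC, mul_assoc, hKL, mul_one]
    calc K * cfc (fun x : ℝ => x⁻¹) C * K * P
        = K * cfc (fun x : ℝ => x⁻¹) C * (K * P) := by rw [mul_assoc]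
      _ = K * cfc (fun x : ℝ => x⁻¹) C * (C * L) := by rw [hKP]
      _ = K * (cfc (fun x : ℝ => x⁻¹) C * C) * L := by simp only [Matrix.mul_assoc]
      _ = K * L := by rw [pinv_mul_self hCpos, mul_one]
      _ = 1 := hKL
  have hQinv : cfc (fun x : ℝ => x⁻¹) Q = K * 1 * K := by
    rw [mul_one, hKdef, ← cfc_mul _ _ Q (contOn _ _) (contOn _ _)]
    exact cfc_congr (fun x hx => by
      have hx0 := spectrum_pos hQ x hx
      rw [← mul_inv]
      rw [Real.mul_self_sqrt hx0.le])
  rw [hPinv, hQinv]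
  have e : K * cfc (fun x : ℝ => x⁻¹) C * K - K * 1 * K
      = K * (cfc (fun x : ℝ => x⁻¹) C - 1) * K := by
    rw [mul_sub, sub_mul]
  rw [e]
  have := hkey.mul_mul_conjTranspose_same K
  rwa [hKh.eq] at this

lemma posSemidef_smul {M : Matrix (Fin n) (Fin n) ℂ} {c : ℝ} (hM : M.PosSemidef) (hc : 0 ≤ c) :
    (c • M).PosSemidef := by
  refine .of_dotProduct_mulVec_nonneg ?_ ?_
  · show (c • M)ᴴ = c • M
    rw [Matrix.conjTranspose_smul, star_trivial, hM.1.eq]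
  · intro x
    have h := hM.dotProduct_mulVec_nonneg x
    rw [Matrix.smul_mulVec, dotProduct_smul]
    rw [Complex.le_def] at h ⊢
    simp only [Complex.zero_re, Complex.zero_im] at h ⊢
    constructor
    · rw [Complex.smul_re]
      exact mul_nonneg hc h.1
    · simp [Complex.smul_im, ← h.2]

lemma posDef_smul {M : Matrix (Fin n) (Fin n) ℂ} {c : ℝ} (hM : M.PosDef) (hc : 0 < c) :
    (c • M).PosDef := by
  refine .of_dotProduct_mulVec_pos ?_ ?_
  · show (c • M)ᴴ = c • M
    rw [Matrix.conjTranspose_smul, star_trivial, hM.1.eq]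
  · intro x hx
    have h := hM.dotProduct_mulVec_pos hx
    rw [Matrix.smul_mulVec, dotProduct_smul]
    rw [Complex.lt_def] at h ⊢
    simp only [Complex.zero_re, Complex.zero_im] at h ⊢
    constructor
    · rw [Complex.smul_re]
      exact mul_pos hc h.1
    · simp [Complex.smul_im, ← h.2]

lemma amhm {A B : Matrix (Fin n) (Fin n) ℂ} (hA : A.PosDef) (hB : B.PosDef) :
    ((1/2 : ℝ) • (cfc (fun x : ℝ => x⁻¹) A + cfc (fun x : ℝ => x⁻¹) B)
      - cfc (fun x : ℝ => x⁻¹) ((1/2 : ℝ) • (A + B))).PosSemidef := by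
  have hAs := hA.1.isSelfAdjoint
  set K := cfc (fun x : ℝ => (Real.sqrt x)⁻¹) A with hKdef
  set L := cfc (fun x : ℝ => Real.sqrt x) A with hLdef
  have hKh : K.IsHermitian := isHermitian_cfc _ A
  have hLK : L * K = 1 := by
    rw [hLdef, hKdef, ← cfc_mul _ _ A (contOn _ _) (contOn _ _),
      cfc_congr (g := fun _ : ℝ => (1:ℝ)) (fun x hx =>
        mul_inv_cancel₀ (Real.sqrt_ne_zero'.mpr (spectrum_pos hA x hx))),
      cfc_const_one ℝ A hAs]
  have hKL : K * L = 1 := by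
    rw [hLdef, hKdef, ← cfc_mul _ _ A (contOn _ _) (contOn _ _),
      cfc_congr (g := fun _ : ℝ => (1:ℝ)) (fun x hx =>
        inv_mul_cancel₀ (Real.sqrt_ne_zero'.mpr (spectrum_pos hA x hx))),
      cfc_const_one ℝ A hAs]
  have hX : (K * B * K).PosDef := posDef_conj hB hKh hLK
  set X := K * B * K with hXdef
  have hXs := hX.1.isSelfAdjoint
  have hpA : cfc (fun x : ℝ => x⁻¹) A = K * K := by
    rw [hKdef, ← cfc_mul _ _ A (contOn _ _) (contOn _ _)]
    exact cfc_congr (fun x hx => by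
      rw [← mul_inv, Real.mul_self_sqrt (spectrum_pos hA x hx).le])
  have hLL : L * L = A := by
    rw [hLdef, ← cfc_mul _ _ A (contOn _ _) (contOn _ _),
      cfc_congr (g := fun x : ℝ => x) (fun x hx =>
        Real.mul_self_sqrt (spectrum_pos hA x hx).le), cfc_id' ℝ A hAs]
  have hXL : X * L = K * B := by
    rw [hXdef, mul_assoc, hKL, mul_one]
  have hLX : L * X = B * K := by
    rw [hXdef]
    simp only [← mul_assoc]
    rw [hLK, one_mul]
  have hBLXL : B = L * X * L := by
    rw [hLX, mul_assoc, hKL, mul_one]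
  have hpB : cfc (fun x : ℝ => x⁻¹) B = K * cfc (fun x : ℝ => x⁻¹) X * K := by
    symm
    apply pinv_unique hB
    calc K * cfc (fun x : ℝ => x⁻¹) X * K * B
        = K * cfc (fun x : ℝ => x⁻¹) X * (K * B) := by rw [mul_assoc]
      _ = K * cfc (fun x : ℝ => x⁻¹) X * (X * L) := by rw [hXL]
      _ = K * (cfc (fun x : ℝ => x⁻¹) X * X) * L := by simp only [Matrix.mul_assoc]
      _ = K * L := by rw [pinv_mul_self hX, mul_one]
      _ = 1 := hKL
  set w : ℝ → ℝ := fun x => (1/2 : ℝ) * (1 + x) with hwdef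
  have hWX : cfc w X = (1/2 : ℝ) • (1 + X) := by
    have h1 := cfc_smul (1/2 : ℝ) (fun x : ℝ => 1 + x) X (contOn _ _)
    simp only [smul_eq_mul] at h1
    rw [hwdef]
    rw [h1, cfc_const_add (1:ℝ) (fun x : ℝ => x) X (contOn _ _) hXs, cfc_id' ℝ X hXs,
      show (algebraMap ℝ (Matrix (Fin n) (Fin n) ℂ)) 1 = 1 from map_one _]
  have hWpos : (cfc w X).PosDef := by
    apply cfc_posDef hX.1
    intro i
    have := hX.eigenvalues_pos i
    rw [hwdef]
    dsimp only
    nlinarith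
  have hD : (1/2 : ℝ) • (A + B) = L * cfc w X * L := by
    rw [hWX, Matrix.mul_smul, Matrix.smul_mul, mul_add, add_mul, mul_one, hLL, ← hBLXL]
  have hDpos : ((1/2 : ℝ) • (A + B)).PosDef := posDef_smul (hA.add hB) (by norm_num)
  have hww : cfc (fun x : ℝ => (w x)⁻¹) X * cfc w X = 1 := by
    rw [← cfc_mul _ _ X (contOn _ _) (contOn _ _),
      cfc_congr (g := fun _ : ℝ => (1:ℝ)) (fun x hx => ?_), cfc_const_one ℝ X hXs]
    have hx0 := spectrum_pos hX x hx
    have : w x ≠ 0 := by rw [hwdef]; dsimp only; nlinarith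
    exact inv_mul_cancel₀ this
  have hpD : cfc (fun x : ℝ => x⁻¹) ((1/2 : ℝ) • (A + B))
      = K * cfc (fun x : ℝ => (w x)⁻¹) X * K := by
    symm
    apply pinv_unique hDpos
    rw [hD]
    have hKLW : K * (L * (cfc w X * L)) = cfc w X * L := by
      rw [← mul_assoc, hKL, one_mul]
    calc K * cfc (fun x : ℝ => (w x)⁻¹) X * K * (L * cfc w X * L)
        = K * (cfc (fun x : ℝ => (w x)⁻¹) X * (K * (L * (cfc w X * L)))) := by
          simp only [Matrix.mul_assoc]
      _ = K * (cfc (fun x : ℝ => (w x)⁻¹) X * (cfc w X * L)) := by rw [hKLW]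
      _ = K * ((cfc (fun x : ℝ => (w x)⁻¹) X * cfc w X) * L) := by
          simp only [Matrix.mul_assoc]
      _ = K * L := by rw [hww, one_mul]
      _ = 1 := hKL
  rw [hpA, hpB, hpD]
  have e : (1/2 : ℝ) • (K * K + K * cfc (fun x : ℝ => x⁻¹) X * K)
      - K * cfc (fun x : ℝ => (w x)⁻¹) X * K
      = K * ((1/2 : ℝ) • (1 + cfc (fun x : ℝ => x⁻¹) X) - cfc (fun x : ℝ => (w x)⁻¹) X) * K := by
    rw [mul_sub, sub_mul]
    congr 1
    rw [Matrix.mul_smul, Matrix.smul_mul, mul_add, add_mul, mul_one]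
  rw [e]
  have hg : ((1/2 : ℝ) • (1 + cfc (fun x : ℝ => x⁻¹) X)
      - cfc (fun x : ℝ => (w x)⁻¹) X).PosSemidef := by
    have h1 := cfc_smul (1/2 : ℝ) (fun x : ℝ => 1 + x⁻¹) X (contOn _ _)
    simp only [smul_eq_mul] at h1
    have h2 : cfc (fun x : ℝ => 1 + x⁻¹) X = 1 + cfc (fun x : ℝ => x⁻¹) X := by
      rw [cfc_const_add (1:ℝ) (fun x : ℝ => x⁻¹) X (contOn _ _) hXs,
        show (algebraMap ℝ (Matrix (Fin n) (Fin n) ℂ)) 1 = 1 from map_one _]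
    have e2 : (1/2 : ℝ) • (1 + cfc (fun x : ℝ => x⁻¹) X)
        - cfc (fun x : ℝ => (w x)⁻¹) X
        = cfc (fun x : ℝ => (1/2 : ℝ) * (1 + x⁻¹) - (w x)⁻¹) X := by
      rw [cfc_sub _ _ X (contOn _ _) (contOn _ _), h1, h2]
    rw [e2]
    apply cfc_posSemidef hX.1
    intro i
    have hv := hX.eigenvalues_pos i
    set v := hX.1.eigenvalues i with hvdef
    have hkey : (1/2 : ℝ) * (1 + v⁻¹) - (w v)⁻¹ = (v - 1)^2 / (2 * v * (1 + v)) := by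
      rw [hwdef]
      dsimp only
      field_simp
      ring
    rw [hkey]
    positivity
  have := hg.mul_mul_conjTranspose_same K
  rwa [hKh.eq] at this


/-! ### Resolvent representation -/

lemma cfc_shift (hA : A.IsHermitian) (l : ℝ) :
    cfc (fun x : ℝ => x + l) A = A + l • 1 := by
  have hAs := hA.isSelfAdjoint
  rw [cfc_congr (g := fun x : ℝ => l + x) (fun x _ => add_comm x l),
    cfc_const_add l (fun x : ℝ => x) A (contOn _ _) hAs, cfc_id' ℝ A hAs,
    Algebra.algebraMap_eq_smul_one, add_comm]

lemma shift_posDef (hA : A.PosDef) {l : ℝ} (hl : 0 < l) : (A + l • 1).PosDef := by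
  rw [← cfc_shift hA.1 l]
  exact cfc_posDef hA.1 (fun i => by have := hA.eigenvalues_pos i; linarith)

lemma pinv_shift (hA : A.PosDef) {l : ℝ} (hl : 0 < l) :
    cfc (fun x : ℝ => (x + l)⁻¹) A = cfc (fun x : ℝ => x⁻¹) (A + l • 1) := by
  apply pinv_unique (shift_posDef hA hl)
  rw [← cfc_shift hA.1 l, ← cfc_mul _ _ A (contOn _ _) (contOn _ _),
    cfc_congr (g := fun _ : ℝ => (1:ℝ)) (fun x hx => by
      have hx0 := spectrum_pos hA x hx
      exact inv_mul_cancel₀ (by linarith)),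
    cfc_const_one ℝ A hA.1.isSelfAdjoint]

lemma cfc_res (hA : A.PosDef) {l : ℝ} (hl : 0 < l) :
    cfc (fun x : ℝ => x / (x + l)) A = 1 - l • cfc (fun x : ℝ => x⁻¹) (A + l • 1) := by
  have hAs := hA.1.isSelfAdjoint
  have e1 : cfc (fun x : ℝ => x / (x + l)) A
      = cfc (fun x : ℝ => 1 - l * (x + l)⁻¹) A := by
    apply cfc_congr
    intro x hx
    have hx0 := spectrum_pos hA x hx
    have hxl : x + l ≠ 0 := by linarith
    field_simp
    ring
  have e2 : cfc (fun x : ℝ => 1 - l * (x + l)⁻¹) A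
      = cfc (fun _ : ℝ => (1:ℝ)) A - cfc (fun x : ℝ => l * (x + l)⁻¹) A :=
    cfc_sub _ _ A (contOn _ _) (contOn _ _)
  rw [e1, e2, cfc_const_one ℝ A hAs,
    cfc_const_mul l (fun x : ℝ => (x + l)⁻¹) A (contOn _ _), pinv_shift hA hl]

lemma res_mono {A B : Matrix (Fin n) (Fin n) ℂ} (hA : A.PosDef) (hB : B.PosDef)
    (hBA : (B - A).PosSemidef) {l : ℝ} (hl : 0 < l) :
    (cfc (fun x : ℝ => x / (x + l)) B - cfc (fun x : ℝ => x / (x + l)) A).PosSemidef := by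
  rw [cfc_res hA hl, cfc_res hB hl]
  have e : (1 - l • cfc (fun x : ℝ => x⁻¹) (B + l • 1))
      - (1 - l • cfc (fun x : ℝ => x⁻¹) (A + l • 1))
      = l • (cfc (fun x : ℝ => x⁻¹) (A + l • 1) - cfc (fun x : ℝ => x⁻¹) (B + l • 1)) := by
    rw [smul_sub]
    abel
  rw [e]
  apply posSemidef_smul _ hl.le
  apply inv_antitone (shift_posDef hA hl) (shift_posDef hB hl)
  rw [show (B + l • 1) - (A + l • 1) = B - A by abel]
  exact hBA

lemma conc_res {A B : Matrix (Fin n) (Fin n) ℂ} (hA : A.PosDef) (hB : B.PosDef)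
    {l : ℝ} (hl : 0 < l) :
    (cfc (fun x : ℝ => x / (x + l)) ((1/2 : ℝ) • (A + B))
      - (1/2 : ℝ) • (cfc (fun x : ℝ => x / (x + l)) A
          + cfc (fun x : ℝ => x / (x + l)) B)).PosSemidef := by
  have hM : ((1/2 : ℝ) • (A + B)).PosDef := posDef_smul (hA.add hB) (by norm_num)
  rw [cfc_res hA hl, cfc_res hB hl, cfc_res hM hl]
  have hMl : (1/2 : ℝ) • (A + B) + l • 1 = (1/2 : ℝ) • ((A + l • 1) + (B + l • 1)) := by
    module
  rw [hMl]
  have e : (1 - l • cfc (fun x : ℝ => x⁻¹) ((1/2 : ℝ) • ((A + l • 1) + (B + l • 1))))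
      - (1/2 : ℝ) • ((1 - l • cfc (fun x : ℝ => x⁻¹) (A + l • 1))
          + (1 - l • cfc (fun x : ℝ => x⁻¹) (B + l • 1)))
      = l • ((1/2 : ℝ) • (cfc (fun x : ℝ => x⁻¹) (A + l • 1)
            + cfc (fun x : ℝ => x⁻¹) (B + l • 1))
          - cfc (fun x : ℝ => x⁻¹) ((1/2 : ℝ) • ((A + l • 1) + (B + l • 1)))) := by
    module
  rw [e]
  exact posSemidef_smul (amhm (shift_posDef hA hl) (shift_posDef hB hl)) hl.le

/-! ### mpow basic lemmas -/

lemma mpow_eq_cfc (hA : A.IsHermitian) (r : ℝ) : mpow A r = cfc (fun x : ℝ => x ^ r) A := by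
  rw [mpow, dif_pos hA, hA.cfc_eq, Matrix.IsHermitian.cfc]
  rfl

lemma mpow_posDef (hA : A.PosDef) (r : ℝ) : (mpow A r).PosDef := by
  rw [mpow_eq_cfc hA.1]
  exact cfc_posDef hA.1 (fun i => Real.rpow_pos_of_pos (hA.eigenvalues_pos i) r)

lemma mpow_isHermitian (hA : A.IsHermitian) (r : ℝ) : (mpow A r).IsHermitian := by
  rw [mpow_eq_cfc hA]
  exact isHermitian_cfc _ _

lemma mpow_mpow (hA : A.PosDef) (u v : ℝ) : mpow (mpow A u) v = mpow A (u * v) := by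
  rw [mpow_eq_cfc hA.1, mpow_eq_cfc (isHermitian_cfc _ _), mpow_eq_cfc hA.1]
  rw [← cfc_comp' (fun x : ℝ => x ^ v) (fun x : ℝ => x ^ u) A (contOn_image _ _ _)
    (contOn _ _) hA.1.isSelfAdjoint]
  exact cfc_congr fun x hx => (Real.rpow_mul (spectrum_pos hA x hx).le u v).symm

lemma mpow_one' (hA : A.PosDef) : mpow A 1 = A := by
  rw [mpow_eq_cfc hA.1, cfc_congr (g := fun x : ℝ => x) (fun x _ => Real.rpow_one x),
    cfc_id' ℝ A hA.1.isSelfAdjoint]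

/-! ### Integral representation of the quadratic form -/

open MeasureTheory Set in
lemma qf_pointwise (hP : P.PosDef) (r : ℝ) (x : Fin n → ℂ) :
    ∀ l ∈ Ioi (0:ℝ),
      l ^ (r-1) * (star x ⬝ᵥ (cfc (fun y : ℝ => y / (y + l)) P *ᵥ x)).re
        = ∑ k, Complex.normSq
            ((star (hP.1.eigenvectorUnitary : Matrix (Fin n) (Fin n) ℂ) *ᵥ x) k)
              * (l ^ (r-1) * (hP.1.eigenvalues k / (hP.1.eigenvalues k + l))) := by
  intro l hl
  rw [qf_cfc hP.1 _ x, Complex.ofReal_re, Finset.mul_sum]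
  exact Finset.sum_congr rfl fun k _ => by ring

open MeasureTheory Set in
lemma qf_res_integrableOn (hP : P.PosDef) {r : ℝ} (hr0 : 0 < r) (hr1 : r < 1) (x : Fin n → ℂ) :
    IntegrableOn (fun l : ℝ =>
      l ^ (r-1) * (star x ⬝ᵥ (cfc (fun y : ℝ => y / (y + l)) P *ᵥ x)).re) (Ioi 0) := by
  have hμ : ∀ k, 0 < hP.1.eigenvalues k := hP.eigenvalues_pos
  apply IntegrableOn.congr_fun
    (f := fun l : ℝ => ∑ k, Complex.normSq
      ((star (hP.1.eigenvectorUnitary : Matrix (Fin n) (Fin n) ℂ) *ᵥ x) k)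
        * (l ^ (r-1) * (hP.1.eigenvalues k / (hP.1.eigenvalues k + l))))
  · exact integrable_finset_sum _ fun k _ =>
      ((kern_integrableOn (hμ k) hr0 hr1).const_mul _)
  · exact fun l hl => (qf_pointwise hP r x l hl).symm
  · exact measurableSet_Ioi

open MeasureTheory Set in
lemma qf_mpow_integral (hP : P.PosDef) {r : ℝ} (hr0 : 0 < r) (hr1 : r < 1) (x : Fin n → ℂ) :
    star x ⬝ᵥ (mpow P r *ᵥ x)
      = (((I0 r)⁻¹ * ∫ l in Ioi (0:ℝ),
          l ^ (r-1) * (star x ⬝ᵥ (cfc (fun y : ℝ => y / (y + l)) P *ᵥ x)).re : ℝ) : ℂ) := by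
  have hμ : ∀ k, 0 < hP.1.eigenvalues k := hP.eigenvalues_pos
  rw [mpow_eq_cfc hP.1, qf_cfc hP.1 _ x]
  congr 1
  rw [setIntegral_congr_fun measurableSet_Ioi (qf_pointwise hP r x)]
  rw [integral_finset_sum _ (fun k _ => ((kern_integrableOn (hμ k) hr0 hr1).const_mul _))]
  have : ∀ k, ∫ l in Ioi (0:ℝ), Complex.normSq
      ((star (hP.1.eigenvectorUnitary : Matrix (Fin n) (Fin n) ℂ) *ᵥ x) k)
        * (l ^ (r-1) * (hP.1.eigenvalues k / (hP.1.eigenvalues k + l)))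
      = Complex.normSq ((star (hP.1.eigenvectorUnitary : Matrix (Fin n) (Fin n) ℂ) *ᵥ x) k)
        * (hP.1.eigenvalues k ^ r * I0 r) := by
    intro k
    rw [MeasureTheory.integral_const_mul, kern_integral (hμ k) hr0 hr1]
  rw [Finset.sum_congr rfl (fun k _ => this k), Finset.mul_sum]
  apply Finset.sum_congr rfl
  intro k _
  have hI := (I0_pos hr0 hr1).ne'
  field_simp

/-! ### The two key inequalities for mpow -/

lemma lh {A B : Matrix (Fin n) (Fin n) ℂ} (hA : A.PosDef) (hB : B.PosDef)
    (hBA : (B - A).PosSemidef) {r : ℝ} (hr0 : 0 < r) (hr1 : r ≤ 1) :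
    (mpow B r - mpow A r).PosSemidef := by
  rcases hr1.lt_or_eq with hr1' | rfl
  · refine .of_dotProduct_mulVec_nonneg ?_ ?_
    · exact (mpow_isHermitian hB.1 r).sub (mpow_isHermitian hA.1 r)
    · intro x
      rw [Matrix.sub_mulVec, dotProduct_sub, qf_mpow_integral hB hr0 hr1' x,
        qf_mpow_integral hA hr0 hr1' x, ← Complex.ofReal_sub, Complex.zero_le_real,
        ← mul_sub]
      apply mul_nonneg (inv_nonneg.2 (I0_pos hr0 hr1').le)
      rw [← MeasureTheory.integral_sub (qf_res_integrableOn hB hr0 hr1' x)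
        (qf_res_integrableOn hA hr0 hr1' x)]
      apply MeasureTheory.setIntegral_nonneg measurableSet_Ioi
      intro l hl
      have hl0 : (0:ℝ) < l := hl
      have hpsd := res_mono hA hB hBA hl0
      have h := hpsd.dotProduct_mulVec_nonneg x
      rw [Matrix.sub_mulVec, dotProduct_sub, Complex.le_def] at h
      simp only [Complex.zero_re, Complex.zero_im, Complex.sub_re] at h
      rw [← mul_sub]
      exact mul_nonneg (Real.rpow_nonneg hl0.le _) (by linarith [h.1])
  · rw [mpow_one' hA, mpow_one' hB]
    exact hBA

lemma hermitian_smul_real {M : Matrix (Fin n) (Fin n) ℂ} (hM : M.IsHermitian) (c : ℝ) :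
    ((c : ℝ) • M).IsHermitian := by
  show (c • M)ᴴ = c • M
  rw [Matrix.conjTranspose_smul, star_trivial, hM.eq]

lemma conc {A B : Matrix (Fin n) (Fin n) ℂ} (hA : A.PosDef) (hB : B.PosDef)
    {r : ℝ} (hr0 : 0 < r) (hr1 : r ≤ 1) :
    (mpow ((1/2 : ℝ) • (A + B)) r - (1/2 : ℝ) • (mpow A r + mpow B r)).PosSemidef := by
  have hM : ((1/2 : ℝ) • (A + B)).PosDef := posDef_smul (hA.add hB) (by norm_num)
  rcases hr1.lt_or_eq with hr1' | rfl
  · refine .of_dotProduct_mulVec_nonneg ?_ ?_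
    · exact (mpow_isHermitian hM.1 r).sub
        (hermitian_smul_real ((mpow_isHermitian hA.1 r).add (mpow_isHermitian hB.1 r)) _)
    · intro x
      rw [Matrix.sub_mulVec, dotProduct_sub, Matrix.smul_mulVec,
        dotProduct_smul, Matrix.add_mulVec, dotProduct_add,
        qf_mpow_integral hM hr0 hr1' x, qf_mpow_integral hA hr0 hr1' x,
        qf_mpow_integral hB hr0 hr1' x, ← Complex.ofReal_add, Complex.real_smul,
        ← Complex.ofReal_mul, ← Complex.ofReal_sub, Complex.zero_le_real]
      have hIA := qf_res_integrableOn hA hr0 hr1' x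
      have hIB := qf_res_integrableOn hB hr0 hr1' x
      have hIM := qf_res_integrableOn hM hr0 hr1' x
      set fA := fun l : ℝ => l ^ (r-1) * (star x ⬝ᵥ (cfc (fun y : ℝ => y / (y + l)) A *ᵥ x)).re
      set fB := fun l : ℝ => l ^ (r-1) * (star x ⬝ᵥ (cfc (fun y : ℝ => y / (y + l)) B *ᵥ x)).re
      set fM := fun l : ℝ => l ^ (r-1) * (star x ⬝ᵥ (cfc (fun y : ℝ => y / (y + l))
        ((1/2 : ℝ) • (A + B)) *ᵥ x)).re
      have hI0 : (0:ℝ) < I0 r := I0_pos hr0 hr1'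
      have e : (I0 r)⁻¹ * (∫ l in Set.Ioi (0:ℝ), fM l)
          - 1/2 * ((I0 r)⁻¹ * (∫ l in Set.Ioi (0:ℝ), fA l)
              + (I0 r)⁻¹ * (∫ l in Set.Ioi (0:ℝ), fB l))
          = (I0 r)⁻¹ * ((∫ l in Set.Ioi (0:ℝ), fM l)
              - ((∫ l in Set.Ioi (0:ℝ), (1/2 : ℝ) * fA l)
                + (∫ l in Set.Ioi (0:ℝ), (1/2 : ℝ) * fB l))) := by
        rw [MeasureTheory.integral_const_mul, MeasureTheory.integral_const_mul]
        ring
      rw [e]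
      apply mul_nonneg (inv_nonneg.2 hI0.le)
      have hg : IntegrableOn (fun l : ℝ => (1/2 : ℝ) * fA l + (1/2 : ℝ) * fB l) (Ioi 0) := by
        exact (hIA.const_mul _).add (hIB.const_mul _)
      rw [← MeasureTheory.integral_add (hIA.const_mul _) (hIB.const_mul _),
        ← MeasureTheory.integral_sub hIM hg]
      apply MeasureTheory.setIntegral_nonneg measurableSet_Ioi
      intro l hl
      have hl0 : (0:ℝ) < l := hl
      have hpsd := conc_res hA hB hl0
      have h := hpsd.dotProduct_mulVec_nonneg x
      rw [Matrix.sub_mulVec, dotProduct_sub, Matrix.smul_mulVec,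
        dotProduct_smul, Matrix.add_mulVec, dotProduct_add,
        Complex.le_def] at h
      simp only [Complex.zero_re, Complex.zero_im, Complex.sub_re, Complex.smul_re,
        Complex.add_re, smul_eq_mul] at h
      have hre := h.1
      show 0 ≤ fM l - ((1/2 : ℝ) * fA l + (1/2 : ℝ) * fB l)
      simp only [fA, fB, fM]
      have expand : l ^ (r-1) * (star x ⬝ᵥ (cfc (fun y : ℝ => y / (y + l))
            ((1/2 : ℝ) • (A + B)) *ᵥ x)).re
          - ((1/2 : ℝ) * (l ^ (r-1) * (star x ⬝ᵥ (cfc (fun y : ℝ => y / (y + l)) A *ᵥ x)).re)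
            + (1/2 : ℝ) * (l ^ (r-1) * (star x ⬝ᵥ (cfc (fun y : ℝ => y / (y + l)) B *ᵥ x)).re))
          = l ^ (r-1) * ((star x ⬝ᵥ (cfc (fun y : ℝ => y / (y + l))
              ((1/2 : ℝ) • (A + B)) *ᵥ x)).re
            - (1/2 : ℝ) * ((star x ⬝ᵥ (cfc (fun y : ℝ => y / (y + l)) A *ᵥ x)).re
              + (star x ⬝ᵥ (cfc (fun y : ℝ => y / (y + l)) B *ᵥ x)).re)) := by ring
      rw [expand]
      exact mul_nonneg (Real.rpow_nonneg hl0.le _) (by linarith)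
  · rw [mpow_one' hM, mpow_one' hA, mpow_one' hB, sub_self]
    exact Matrix.PosSemidef.zero

end AvgRpow

theorem average_rpow_loewner {n : ℕ} (hn : 1 ≤ n) (A B : Matrix (Fin n) (Fin n) ℂ)
    (hA : A.PosDef) (hB : B.PosDef) (s t : ℝ) (hs : 0 < s) (hst : s ≤ t) (ht : t ≤ 1) :
    (mpow ((1 / 2 : ℝ) • (mpow A t + mpow B (-t))) s -
      mpow ((1 / 2 : ℝ) • (mpow A s + mpow B (-s))) t).PosSemidef := by
  have ht0 : 0 < t := lt_of_lt_of_le hs hst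
  have hP : (mpow A t).PosDef := AvgRpow.mpow_posDef hA t
  have hQ : (mpow B (-t)).PosDef := AvgRpow.mpow_posDef hB (-t)
  have hD : ((1/2 : ℝ) • (mpow A t + mpow B (-t))).PosDef :=
    AvgRpow.posDef_smul (hP.add hQ) (by norm_num)
  have hr0 : 0 < s / t := div_pos hs ht0
  have hr1 : s / t ≤ 1 := (div_le_one ht0).2 hst
  have hconc := AvgRpow.conc hP hQ hr0 hr1
  have et : t * (s/t) = s := by rw [mul_comm, div_mul_cancel₀ _ ht0.ne']
  have e1 : mpow (mpow A t) (s/t) = mpow A s := by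
    rw [AvgRpow.mpow_mpow hA, et]
  have et2 : -t * (s/t) = -s := by rw [neg_mul, mul_comm, div_mul_cancel₀ _ ht0.ne']
  have e2 : mpow (mpow B (-t)) (s/t) = mpow B (-s) := by
    rw [AvgRpow.mpow_mpow hB, et2]
  rw [e1, e2] at hconc
  have hE : ((1/2 : ℝ) • (mpow A s + mpow B (-s))).PosDef :=
    AvgRpow.posDef_smul ((AvgRpow.mpow_posDef hA s).add (AvgRpow.mpow_posDef hB (-s)))
      (by norm_num)
  have hDr : (mpow ((1/2 : ℝ) • (mpow A t + mpow B (-t))) (s/t)).PosDef :=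
    AvgRpow.mpow_posDef hD _
  have hlh := AvgRpow.lh hE hDr hconc ht0 ht
  rw [AvgRpow.mpow_mpow hD] at hlh
  have e3 : s / t * t = s := div_mul_cancel₀ _ ht0.ne'
  rw [e3] at hlh
  exact hlh
end
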